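/- Let B be a countable Boolean subalgebra of the Borel sets of 2^ω containing all clopen sets and contained in 𝔹 = {A Borel : lim_k k·χ_k(A) = 0}. Let (q_n)_{n∈ω} be a sequence of ultrafilters on B and (V_n)_{n∈ω} an antichain in B with V_n ∈ q_n for every n. Then there exist finite binary strings σ_n ∈ 2^{<ω} such that V_n ∩ [σ_n] ∈ q_n for every n and the union ∪_{n∈ω}(V_n ∩ [σ_n]) belongs to 𝔹. -/

import Mathlib

open MeasureTheory Filter Topology

/-- The cylinder in Cantor space determined by `σ : 2^n`. -/
def cyl (n : ℕ) (σ : Fin n → Bool) : Set (ℕ → Bool) := {x | ∀ i : Fin n, x i = σ i}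

/-- The finite Boolean algebra `F_n` of unions of cylinders of length `n`. -/
def FnAlg (n : ℕ) : Set (Set (ℕ → Bool)) :=
  {B | ∃ S : Set (Fin n → Bool), B = ⋃ σ ∈ S, cyl n σ}

/-- `χ_n(A) = min{λ(A △ B) : B ∈ F_n}`. -/
noncomputable def chi (lam : Measure (ℕ → Bool)) (n : ℕ) (A : Set (ℕ → Bool)) : ℝ :=
  sInf {r : ℝ | ∃ B ∈ FnAlg n, r = (lam (symmDiff A B)).toReal}

/-- The family `𝔹 = {A Borel : lim n·χ_n(A) = 0}`. -/
def BB (lam : Measure (ℕ → Bool)) : Set (Set (ℕ → Bool)) :=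
  {A | MeasurableSet A ∧
    Tendsto (fun n : ℕ => (n : ℝ) * chi lam n A) atTop (𝓝 0)}

/-- The cylinder determined by a finite binary string. -/
def cylL (s : List Bool) : Set (ℕ → Bool) :=
  {x | ∀ i : Fin s.length, x i = s.get i}

/-- An ultrafilter on a Boolean algebra `ℬ` of subsets of Cantor space. -/
def IsUltraOn (ℬ : Set (Set (ℕ → Bool))) (q : Set (Set (ℕ → Bool))) : Prop :=
  q ⊆ ℬ ∧ (∀ A ∈ q, ∀ B ∈ ℬ, A ⊆ B → B ∈ q) ∧
  (∀ A ∈ q, ∀ B ∈ q, A ∩ B ∈ q) ∧ (∀ A ∈ ℬ, A ∈ q ↔ Aᶜ ∉ q)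

def res (n : ℕ) (x : ℕ → Bool) : Fin n → Bool := fun i => x i

lemma cyl_eq_preimage (n : ℕ) (σ : Fin n → Bool) : cyl n σ = res n ⁻¹' {σ} := by
  ext x
  simp [cyl, res, funext_iff, Set.mem_preimage]

lemma biUnion_cyl_eq (n : ℕ) (S : Set (Fin n → Bool)) :
    (⋃ σ ∈ S, cyl n σ) = res n ⁻¹' S := by
  ext x
  simp only [Set.mem_iUnion, cyl_eq_preimage, Set.mem_preimage, Set.mem_singleton_iff]
  exact ⟨fun ⟨σ, hσ, h⟩ => h ▸ hσ, fun h => ⟨res n x, h, rfl⟩⟩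

lemma mem_FnAlg_iff {n : ℕ} {B : Set (ℕ → Bool)} :
    B ∈ FnAlg n ↔ ∃ S : Set (Fin n → Bool), B = res n ⁻¹' S := by
  constructor
  · rintro ⟨S, rfl⟩; exact ⟨S, biUnion_cyl_eq n S⟩
  · rintro ⟨S, rfl⟩; exact ⟨S, (biUnion_cyl_eq n S).symm⟩

lemma FnAlg_mono {m k : ℕ} (h : m ≤ k) : FnAlg m ⊆ FnAlg k := by
  intro B hB
  rw [mem_FnAlg_iff] at hB ⊢
  obtain ⟨S, rfl⟩ := hB
  refine ⟨(fun τ : Fin k → Bool => fun i : Fin m => τ (Fin.castLE h i)) ⁻¹' S, ?_⟩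
  rfl

lemma FnAlg_empty (n : ℕ) : (∅ : Set (ℕ → Bool)) ∈ FnAlg n :=
  mem_FnAlg_iff.2 ⟨∅, rfl⟩

lemma FnAlg_union {n : ℕ} {A B : Set (ℕ → Bool)} (hA : A ∈ FnAlg n) (hB : B ∈ FnAlg n) :
    A ∪ B ∈ FnAlg n := by
  rw [mem_FnAlg_iff] at hA hB ⊢
  obtain ⟨S, rfl⟩ := hA; obtain ⟨T, rfl⟩ := hB
  exact ⟨S ∪ T, rfl⟩

lemma FnAlg_inter {n : ℕ} {A B : Set (ℕ → Bool)} (hA : A ∈ FnAlg n) (hB : B ∈ FnAlg n) :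
    A ∩ B ∈ FnAlg n := by
  rw [mem_FnAlg_iff] at hA hB ⊢
  obtain ⟨S, rfl⟩ := hA; obtain ⟨T, rfl⟩ := hB
  exact ⟨S ∩ T, rfl⟩

lemma FnAlg_biUnion {n : ℕ} {ι : Type*} (T : Finset ι) (f : ι → Set (ℕ → Bool))
    (hf : ∀ j ∈ T, f j ∈ FnAlg n) : (⋃ j ∈ T, f j) ∈ FnAlg n := by
  classical
  induction T using Finset.induction with
  | empty => simpa using FnAlg_empty n
  | insert _ _ hj ih =>
      rename_i a T'
      rw [Finset.set_biUnion_insert]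
      exact FnAlg_union (hf a (Finset.mem_insert_self a T'))
        (ih fun j hj' => hf j (Finset.mem_insert_of_mem hj'))

lemma cylL_eq (s : List Bool) : cylL s = cyl s.length s.get := rfl

lemma cylL_mem_FnAlg {s : List Bool} {k : ℕ} (h : s.length ≤ k) : cylL s ∈ FnAlg k := by
  refine FnAlg_mono h ?_
  rw [cylL_eq]
  exact ⟨{s.get}, by simp [cyl_eq_preimage, biUnion_cyl_eq]⟩

lemma isClopen_cyl (n : ℕ) (σ : Fin n → Bool) : IsClopen (cyl n σ) := by
  have : cyl n σ = ⋂ i : Fin n, (fun x : ℕ → Bool => x i) ⁻¹' {σ i} := by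
    ext x; simp [cyl]
  rw [this]
  exact isClopen_iInter_of_finite fun i => (isClopen_discrete _).preimage (continuous_apply _)

lemma measurableSet_cyl (n : ℕ) (σ : Fin n → Bool) : MeasurableSet (cyl n σ) :=
  (isClopen_cyl n σ).isClosed.measurableSet

lemma cylL_ofFn {m : ℕ} (τ : Fin m → Bool) : cylL (List.ofFn τ) = cyl m τ := by
  ext x
  simp only [cylL, cyl, Set.mem_setOf_eq, List.length_ofFn, List.get_ofFn]
  constructor
  · intro h i
    have := h (Fin.cast (List.length_ofFn : (List.ofFn τ).length = m).symm i)
    simpa using this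
  · intro h i
    simpa using h (Fin.cast (List.length_ofFn : (List.ofFn τ).length = m) i)

lemma chiSet_def (lam : Measure (ℕ → Bool)) (n : ℕ) (A : Set (ℕ → Bool)) :
    {r : ℝ | ∃ B ∈ FnAlg n, r = (lam (symmDiff A B)).toReal} =
      (fun B => (lam (symmDiff A B)).toReal) '' (FnAlg n) := by
  ext r
  simp only [Set.mem_setOf_eq, Set.mem_image]
  exact ⟨fun ⟨B, hB, h⟩ => ⟨B, hB, h.symm⟩, fun ⟨B, hB, h⟩ => ⟨B, hB, h.symm⟩⟩

lemma FnAlg_finite (n : ℕ) : (FnAlg n).Finite := by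
  have : FnAlg n = (fun S : Set (Fin n → Bool) => ⋃ σ ∈ S, cyl n σ) '' Set.univ := by
    ext B
    simp only [Set.image_univ, Set.mem_range]
    exact ⟨fun ⟨S, h⟩ => ⟨S, h.symm⟩, fun ⟨S, h⟩ => ⟨S, h.symm⟩⟩
  rw [this]
  exact Set.finite_univ.image _

lemma chiSet_finite (lam : Measure (ℕ → Bool)) (n : ℕ) (A : Set (ℕ → Bool)) :
    {r : ℝ | ∃ B ∈ FnAlg n, r = (lam (symmDiff A B)).toReal}.Finite := by
  rw [chiSet_def]; exact (FnAlg_finite n).image _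

lemma chiSet_nonempty (lam : Measure (ℕ → Bool)) (n : ℕ) (A : Set (ℕ → Bool)) :
    {r : ℝ | ∃ B ∈ FnAlg n, r = (lam (symmDiff A B)).toReal}.Nonempty :=
  ⟨_, ⟨∅, FnAlg_empty n, rfl⟩⟩

lemma chi_exists (lam : Measure (ℕ → Bool)) (n : ℕ) (A : Set (ℕ → Bool)) :
    ∃ B ∈ FnAlg n, chi lam n A = (lam (symmDiff A B)).toReal := by
  have h := (chiSet_nonempty lam n A).csInf_mem (chiSet_finite lam n A)
  exact h

lemma chi_le (lam : Measure (ℕ → Bool)) (n : ℕ) (A : Set (ℕ → Bool))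
    {B : Set (ℕ → Bool)} (hB : B ∈ FnAlg n) :
    chi lam n A ≤ (lam (symmDiff A B)).toReal :=
  csInf_le (chiSet_finite lam n A).bddBelow ⟨B, hB, rfl⟩

lemma chi_nonneg (lam : Measure (ℕ → Bool)) (n : ℕ) (A : Set (ℕ → Bool)) :
    0 ≤ chi lam n A := by
  obtain ⟨B, _, h⟩ := chi_exists lam n A
  rw [h]; exact ENNReal.toReal_nonneg

section Ultra
variable {ℬ q : Set (Set (ℕ → Bool))}
variable (hcompl : ∀ A ∈ ℬ, Aᶜ ∈ ℬ)
variable (hunion : ∀ A ∈ ℬ, ∀ B ∈ ℬ, A ∪ B ∈ ℬ)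
variable (hclopen : ∀ U : Set (ℕ → Bool), IsClopen U → U ∈ ℬ)
variable (hq : IsUltraOn ℬ q)

include hcompl hunion in
lemma B_inter {A B : Set (ℕ → Bool)} (hA : A ∈ ℬ) (hB : B ∈ ℬ) : A ∩ B ∈ ℬ := by
  have : A ∩ B = (Aᶜ ∪ Bᶜ)ᶜ := by rw [Set.compl_union, compl_compl, compl_compl]
  rw [this]
  exact hcompl _ (hunion _ (hcompl _ hA) _ (hcompl _ hB))

include hclopen hq in
lemma empty_not_mem_q : (∅ : Set (ℕ → Bool)) ∉ q := by
  intro h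
  have huniv : (Set.univ : Set (ℕ → Bool)) ∈ ℬ := hclopen _ isClopen_univ
  have h1 : (Set.univ : Set (ℕ → Bool)) ∈ q :=
    hq.2.1 _ h _ huniv (Set.empty_subset _)
  have h2 := (hq.2.2.2 _ huniv).1 h1
  rw [Set.compl_univ] at h2
  exact h2 h

include hunion hclopen in
lemma biUnion_cyl_mem (m : ℕ) (T : Finset (Fin m → Bool)) :
    (⋃ τ ∈ T, cyl m τ) ∈ ℬ := by
  classical
  induction T using Finset.induction with
  | empty => simpa using hclopen _ isClopen_empty
  | insert _ _ h2 ih2 =>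
      rename_i σ T''
      rw [Finset.set_biUnion_insert]
      exact hunion _ (hclopen _ (isClopen_cyl m σ)) _ ih2

include hcompl hunion hclopen hq in
lemma ultra_select {A : Set (ℕ → Bool)} (hAq : A ∈ q) (m : ℕ) :
    ∃ τ : Fin m → Bool, A ∩ cyl m τ ∈ q := by
  classical
  have hAB : A ∈ ℬ := hq.1 hAq
  have hcylB : ∀ τ : Fin m → Bool, cyl m τ ∈ ℬ := fun τ => hclopen _ (isClopen_cyl m τ)
  have key : ∀ T : Finset (Fin m → Bool), (A ∩ ⋃ τ ∈ T, cyl m τ) ∈ q →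
      ∃ τ ∈ T, A ∩ cyl m τ ∈ q := by
    intro T
    induction T using Finset.induction with
    | empty =>
        intro h
        simp only [Finset.notMem_empty, Set.iUnion_of_empty, Set.iUnion_empty,
          Set.inter_empty] at h
        exact absurd h (empty_not_mem_q hclopen hq)
    | insert _ _ hτ ih =>
        rename_i τ T'
        intro h
        by_cases hc : A ∩ cyl m τ ∈ q
        · exact ⟨τ, Finset.mem_insert_self _ _, hc⟩
        · have hAcB : A ∩ cyl m τ ∈ ℬ := B_inter hcompl hunion hAB (hcylB τ)
          have hcomp : (A ∩ cyl m τ)ᶜ ∈ q := by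
            by_contra hcc
            exact hc (((hq.2.2.2 _ hAcB).2) (by simpa using hcc))
          have hmem : (A ∩ ⋃ σ ∈ insert τ T', cyl m σ) ∩ (A ∩ cyl m τ)ᶜ ∈ q :=
            hq.2.2.1 _ h _ hcomp
          have hrest : (A ∩ ⋃ σ ∈ T', cyl m σ) ∈ ℬ :=
            B_inter hcompl hunion hAB (biUnion_cyl_mem hunion hclopen m T')
          have hsub : (A ∩ ⋃ σ ∈ insert τ T', cyl m σ) ∩ (A ∩ cyl m τ)ᶜ ⊆
              A ∩ ⋃ σ ∈ T', cyl m σ := by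
            rintro x ⟨⟨hxA, hxU⟩, hxc⟩
            simp only [Finset.mem_insert, Set.mem_iUnion, exists_prop] at hxU
            obtain ⟨σ, hσ, hxσ⟩ := hxU
            rcases hσ with rfl | hσ
            · exact absurd ⟨hxA, hxσ⟩ hxc
            · exact ⟨hxA, Set.mem_biUnion hσ hxσ⟩
          obtain ⟨σ, hσ, hout⟩ := ih (hq.2.1 _ hmem _ hrest hsub)
          exact ⟨σ, Finset.mem_insert_of_mem hσ, hout⟩
  have hcover : A ∩ ⋃ τ ∈ (Finset.univ : Finset (Fin m → Bool)), cyl m τ = A := by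
    have : (⋃ τ ∈ (Finset.univ : Finset (Fin m → Bool)), cyl m τ) = Set.univ := by
      ext x
      simp only [Set.mem_iUnion, Set.mem_univ, iff_true, exists_prop]
      exact ⟨res m x, Finset.mem_univ _, fun i => rfl⟩
    rw [this, Set.inter_univ]
  obtain ⟨τ, _, hτ⟩ := key Finset.univ (by rwa [hcover])
  exact ⟨τ, hτ⟩

end Ultra

lemma symmDiff_inter_subset {α : Type*} (A B X : Set α) :
    symmDiff (A ∩ X) (B ∩ X) ⊆ symmDiff A B := by
  intro x hx
  rw [Set.mem_symmDiff] at hx ⊢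
  rcases hx with ⟨⟨h1, h2⟩, h3⟩ | ⟨⟨h1, h2⟩, h3⟩
  · exact Or.inl ⟨h1, fun hc => h3 ⟨hc, h2⟩⟩
  · exact Or.inr ⟨h1, fun hc => h3 ⟨hc, h2⟩⟩

lemma symmDiff_iUnion_subset {α : Type*} (W C : ℕ → Set α) (N : ℕ) :
    symmDiff (⋃ j, W j) (⋃ j ∈ Finset.range N, C j) ⊆
      (⋃ j ∈ Finset.range N, symmDiff (W j) (C j)) ∪ ⋃ i, W (N + i) := by
  intro x hx
  rw [Set.mem_symmDiff] at hx
  rcases hx with ⟨hxU, hxD⟩ | ⟨hxD, hxU⟩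
  · obtain ⟨j, hj⟩ := Set.mem_iUnion.1 hxU
    by_cases hjN : j < N
    · exact Or.inl (Set.mem_biUnion (Finset.mem_range.2 hjN)
        (Set.mem_symmDiff.2 (Or.inl ⟨hj,
          fun hc => hxD (Set.mem_biUnion (Finset.mem_range.2 hjN) hc)⟩)))
    · exact Or.inr (Set.mem_iUnion.2 ⟨j - N, by
        rwa [Nat.add_sub_cancel' (le_of_not_gt hjN)]⟩)
  · obtain ⟨j, hj, hxj⟩ := Set.mem_iUnion₂.1 hxD
    refine Or.inl (Set.mem_biUnion hj (Set.mem_symmDiff.2 (Or.inr ⟨hxj, ?_⟩)))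
    exact fun hc => hxU (Set.mem_iUnion.2 ⟨j, hc⟩)

lemma tsum_half_geo : (∑' i : ℕ, ((1 : ENNReal) / 2) ^ i) = 2 := by
  rw [ENNReal.tsum_geometric]
  rw [one_div, ENNReal.one_sub_inv_two]
  simp

theorem antichain_supremum_in_BB
    (lam : Measure (ℕ → Bool)) [IsProbabilityMeasure lam]
    (hlam : ∀ (n : ℕ) (σ : Fin n → Bool), lam (cyl n σ) = (1 / 2 : ENNReal) ^ n)
    (ℬ : Set (Set (ℕ → Bool)))
    (hcount : ℬ.Countable)
    (hcompl : ∀ A ∈ ℬ, Aᶜ ∈ ℬ)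
    (hunion : ∀ A ∈ ℬ, ∀ B ∈ ℬ, A ∪ B ∈ ℬ)
    (hclopen : ∀ U : Set (ℕ → Bool), IsClopen U → U ∈ ℬ)
    (hsub : ℬ ⊆ BB lam)
    (q : ℕ → Set (Set (ℕ → Bool)))
    (hq : ∀ n, IsUltraOn ℬ (q n))
    (V : ℕ → Set (ℕ → Bool))
    (hVmem : ∀ n, V n ∈ ℬ)
    (hVne : ∀ n, V n ≠ ∅)
    (hVdisj : ∀ i j, i ≠ j → V i ∩ V j = ∅)
    (hVq : ∀ n, V n ∈ q n) :
    ∃ σ : ℕ → List Bool,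
      (∀ n, V n ∩ cylL (σ n) ∈ q n) ∧
      (⋃ n, V n ∩ cylL (σ n)) ∈ BB lam := by
  classical
  -- tendsto facts
  have hVBB : ∀ j, Tendsto (fun k : ℕ => (k : ℝ) * chi lam k (V j)) atTop (𝓝 0) :=
    fun j => (hsub (hVmem j)).2
  have hsumt : ∀ s : ℕ, Tendsto
      (fun k : ℕ => (k : ℝ) * ∑ j ∈ Finset.range (s + 1), chi lam k (V j)) atTop (𝓝 0) := by
    intro s
    have : (fun k : ℕ => (k : ℝ) * ∑ j ∈ Finset.range (s + 1), chi lam k (V j)) =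
        fun k : ℕ => ∑ j ∈ Finset.range (s + 1), (k : ℝ) * chi lam k (V j) := by
      funext k; rw [Finset.mul_sum]
    rw [this]
    have := tendsto_finset_sum (Finset.range (s + 1))
      (fun j _ => hVBB j)
    simpa using this
  have hgeo : Tendsto (fun k : ℕ => 2 * (k : ℝ) * (1 / 2 : ℝ) ^ k) atTop (𝓝 0) := by
    have hsml : Summable (fun k : ℕ => (k : ℝ) ^ 1 * (1 / 2 : ℝ) ^ k) :=
      summable_pow_mul_geometric_of_norm_lt_one 1 (by rw [Real.norm_eq_abs, abs_of_pos] <;> norm_num)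
    have h0 := hsml.tendsto_atTop_zero.const_mul (2 : ℝ)
    simp only [pow_one, mul_zero] at h0
    convert h0 using 2 with k
    ring
  -- choose thresholds
  have hex : ∀ s : ℕ, ∃ M : ℕ, ∀ k ≥ M,
      ((k : ℝ) * ∑ j ∈ Finset.range (s + 1), chi lam k (V j) ≤ (1 / 2 : ℝ) ^ s ∧
        2 * (k : ℝ) * (1 / 2 : ℝ) ^ k ≤ (1 / 2 : ℝ) ^ s) := by
    intro s
    have hpos : (0 : ℝ) < (1 / 2 : ℝ) ^ s := by positivity
    have h1 := (hsumt s).eventually (eventually_le_nhds hpos)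
    have h2 := hgeo.eventually (eventually_le_nhds hpos)
    exact eventually_atTop.1 (h1.and h2)
  choose M hM using hex
  obtain ⟨m, hm0, hmS⟩ : ∃ m : ℕ → ℕ, m 0 = 0 ∧ ∀ s, m (s + 1) = max (m s + 1) (M (s + 1)) :=
    ⟨fun s => Nat.rec 0 (fun t ih => max (ih + 1) (M (t + 1))) s, rfl, fun s => rfl⟩
  have hmono : StrictMono m := strictMono_nat_of_lt_succ fun s => by
    rw [hmS]; exact lt_of_lt_of_le (Nat.lt_succ_self _) (le_max_left _ _)
  have hP : ∀ s, ∀ k ≥ m (s + 1),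
      ((k : ℝ) * ∑ j ∈ Finset.range (s + 2), chi lam k (V j) ≤ (1 / 2 : ℝ) ^ (s + 1) ∧
        2 * (k : ℝ) * (1 / 2 : ℝ) ^ k ≤ (1 / 2 : ℝ) ^ (s + 1)) := by
    intro s k hk
    refine hM (s + 1) k (le_trans ?_ hk)
    rw [hmS]; exact le_max_right _ _
  -- choose cylinders
  have hsel : ∀ n : ℕ, ∃ τ : Fin (m n) → Bool, V n ∩ cyl (m n) τ ∈ q n :=
    fun n => ultra_select hcompl hunion hclopen (hq n) (hVq n) (m n)
  choose τ hτ using hsel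
  refine ⟨fun n => List.ofFn (τ n), ?_, ?_⟩
  · intro n; rw [cylL_ofFn]; exact hτ n
  set σ : ℕ → List Bool := fun n => List.ofFn (τ n) with hσ
  set W : ℕ → Set (ℕ → Bool) := fun n => V n ∩ cylL (σ n) with hW
  have hlen : ∀ n, (σ n).length = m n := fun n => (List.length_ofFn : (List.ofFn (τ n)).length = m n)
  have hWmeas : ∀ n, MeasurableSet (W n) := by
    intro n
    refine ((hsub (hVmem n)).1).inter ?_
    rw [hσ, cylL_ofFn]
    exact measurableSet_cyl _ _
  have hWle : ∀ j, lam (W j) ≤ (1 / 2 : ENNReal) ^ (m j) := by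
    intro j
    calc lam (W j) ≤ lam (cylL (σ j)) := measure_mono Set.inter_subset_right
    _ = (1 / 2 : ENNReal) ^ (m j) := by
        rw [cylL_eq, hlam, hlen]
  set U : Set (ℕ → Bool) := ⋃ n, W n with hU
  -- key estimate
  have key : ∀ n k : ℕ, m (n + 1) ≤ k → k < m (n + 2) →
      (k : ℝ) * chi lam k U ≤ (1 / 2 : ℝ) ^ n := by
    intro n k hk1 hk2
    have hBj : ∀ j : ℕ, ∃ B ∈ FnAlg k, chi lam k (V j) = (lam (symmDiff (V j) B)).toReal :=
      fun j => chi_exists lam k (V j)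
    choose B hBmem hBeq using hBj
    set C : ℕ → Set (ℕ → Bool) := fun j => B j ∩ cylL (σ j) with hC
    have hCF : ∀ j ∈ Finset.range (n + 2), C j ∈ FnAlg k := by
      intro j hj
      refine FnAlg_inter (hBmem j) (cylL_mem_FnAlg ?_)
      rw [hlen]
      have : j ≤ n + 1 := Nat.lt_succ_iff.1 (Finset.mem_range.1 hj)
      exact le_trans (hmono.monotone this) hk1
    set D : Set (ℕ → Bool) := ⋃ j ∈ Finset.range (n + 2), C j with hD
    have hDF : D ∈ FnAlg k := FnAlg_biUnion _ _ hCF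
    -- measure bound in ENNReal
    have htail : lam (⋃ i, W (n + 2 + i)) ≤ (1 / 2 : ENNReal) ^ (m (n + 2)) * 2 := by
      calc lam (⋃ i, W (n + 2 + i)) ≤ ∑' i, lam (W (n + 2 + i)) := measure_iUnion_le _
      _ ≤ ∑' i : ℕ, (1 / 2 : ENNReal) ^ (m (n + 2)) * (1 / 2) ^ i := by
          refine ENNReal.tsum_le_tsum fun i => ?_
          refine le_trans (hWle _) ?_
          rw [← pow_add]
          refine pow_le_pow_right_of_le_one' (by norm_num) ?_
          have h1 : m (n + 2) + i ≤ m (n + 2 + i) := by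
            induction i with
            | zero => simp
            | succ i ih =>
                have h2 := hmono (by omega : n + 2 + i < n + 2 + (i + 1))
                omega
          exact h1
      _ = (1 / 2 : ENNReal) ^ (m (n + 2)) * 2 := by
          rw [ENNReal.tsum_mul_left, tsum_half_geo]
    have hsd : lam (symmDiff U D) ≤
        (∑ j ∈ Finset.range (n + 2), lam (symmDiff (V j) (B j))) +
          (1 / 2 : ENNReal) ^ (m (n + 2)) * 2 := by
      calc lam (symmDiff U D)
          ≤ lam ((⋃ j ∈ Finset.range (n + 2), symmDiff (W j) (C j)) ∪ ⋃ i, W (n + 2 + i)) :=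
            measure_mono (symmDiff_iUnion_subset W C (n + 2))
        _ ≤ lam (⋃ j ∈ Finset.range (n + 2), symmDiff (W j) (C j)) +
              lam (⋃ i, W (n + 2 + i)) := measure_union_le _ _
        _ ≤ (∑ j ∈ Finset.range (n + 2), lam (symmDiff (W j) (C j))) +
              lam (⋃ i, W (n + 2 + i)) := by
            gcongr
            exact measure_biUnion_finset_le _ _
        _ ≤ (∑ j ∈ Finset.range (n + 2), lam (symmDiff (V j) (B j))) +
              (1 / 2 : ENNReal) ^ (m (n + 2)) * 2 := by
            refine add_le_add (Finset.sum_le_sum fun j hj => ?_) htail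
            exact measure_mono (symmDiff_inter_subset (V j) (B j) (cylL (σ j)))
    have hfin : ∀ j ∈ Finset.range (n + 2), lam (symmDiff (V j) (B j)) ≠ ⊤ :=
      fun j _ => measure_ne_top lam _
    have hchiU : chi lam k U ≤
        (∑ j ∈ Finset.range (n + 2), chi lam k (V j)) + (1 / 2 : ℝ) ^ (m (n + 2)) * 2 := by
      refine le_trans (chi_le lam k U hDF) ?_
      have := ENNReal.toReal_mono ?_ hsd
      · refine le_trans this ?_
        rw [ENNReal.toReal_add (by
            exact (ENNReal.sum_lt_top.2 fun j hj => (hfin j hj).lt_top).ne) (by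
            exact ENNReal.mul_ne_top (by simp [ENNReal.pow_ne_top]) (by norm_num)),
          ENNReal.toReal_sum hfin]
        gcongr with j hj
        · rw [hBeq j]
        · rw [ENNReal.toReal_mul, ENNReal.toReal_pow]
          norm_num
      · refine ENNReal.add_ne_top.2 ⟨?_, ?_⟩
        · exact (ENNReal.sum_lt_top.2 fun j hj => (hfin j hj).lt_top).ne
        · exact ENNReal.mul_ne_top (by simp [ENNReal.pow_ne_top]) (by norm_num)
    have hk0 : (0 : ℝ) ≤ (k : ℝ) := Nat.cast_nonneg k
    have h1 : (k : ℝ) * ∑ j ∈ Finset.range (n + 2), chi lam k (V j) ≤ (1 / 2 : ℝ) ^ (n + 1) :=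
      (hP n k hk1).1
    have h2 : (k : ℝ) * ((1 / 2 : ℝ) ^ (m (n + 2)) * 2) ≤ (1 / 2 : ℝ) ^ (n + 2) := by
      have hkm : (k : ℝ) ≤ (m (n + 2) : ℝ) := by exact_mod_cast le_of_lt hk2
      have hmono2 := (hP (n + 1) (m (n + 2)) le_rfl).2
      calc (k : ℝ) * ((1 / 2 : ℝ) ^ (m (n + 2)) * 2)
          = 2 * (k : ℝ) * (1 / 2 : ℝ) ^ (m (n + 2)) := by ring
        _ ≤ 2 * (m (n + 2) : ℝ) * (1 / 2 : ℝ) ^ (m (n + 2)) := by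
            have : (0:ℝ) ≤ (1 / 2 : ℝ) ^ (m (n + 2)) := by positivity
            nlinarith
        _ ≤ (1 / 2 : ℝ) ^ (n + 2) := hmono2
    calc (k : ℝ) * chi lam k U
        ≤ (k : ℝ) * ((∑ j ∈ Finset.range (n + 2), chi lam k (V j)) +
            (1 / 2 : ℝ) ^ (m (n + 2)) * 2) := by
          exact mul_le_mul_of_nonneg_left hchiU hk0
      _ = (k : ℝ) * ∑ j ∈ Finset.range (n + 2), chi lam k (V j) +
            (k : ℝ) * ((1 / 2 : ℝ) ^ (m (n + 2)) * 2) := by ring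
      _ ≤ (1 / 2 : ℝ) ^ (n + 1) + (1 / 2 : ℝ) ^ (n + 2) := add_le_add h1 h2
      _ ≤ (1 / 2 : ℝ) ^ n := by
          rw [pow_succ, pow_succ, pow_succ]
          have : (0:ℝ) ≤ (1/2:ℝ)^n := by positivity
          nlinarith
  -- conclude
  constructor
  · exact MeasurableSet.iUnion hWmeas
  · rw [Metric.tendsto_atTop]
    intro ε hε
    obtain ⟨n₀, hn₀⟩ := exists_pow_lt_of_lt_one hε (by norm_num : (1 / 2 : ℝ) < 1)
    refine ⟨m (n₀ + 1), fun k hk => ?_⟩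
    have hex' : ∃ t, k < m t := ⟨k + 1, lt_of_lt_of_le (Nat.lt_succ_self k) (hmono.le_apply)⟩
    set t := Nat.find hex' with ht
    have htk : k < m t := Nat.find_spec hex'
    have hmin : ∀ u < t, m u ≤ k := fun u hu => le_of_not_gt (Nat.find_min hex' hu)
    have ht2 : n₀ + 2 ≤ t := by
      by_contra hc
      push_neg at hc
      have : m t ≤ m (n₀ + 1) := hmono.monotone (by omega)
      omega
    obtain ⟨s, hts⟩ : ∃ s, t = s + 2 := ⟨t - 2, by omega⟩
    rw [hts] at htk
    have hbound := key s k (hmin (s + 1) (by omega)) htk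
    have hnn : (0 : ℝ) ≤ (k : ℝ) * chi lam k U :=
      mul_nonneg (Nat.cast_nonneg k) (chi_nonneg lam k U)
    rw [Real.dist_eq, sub_zero, abs_of_nonneg hnn]
    calc (k : ℝ) * chi lam k U ≤ (1 / 2 : ℝ) ^ s := hbound
      _ ≤ (1 / 2 : ℝ) ^ n₀ := pow_le_pow_of_le_one (by norm_num) (by norm_num) (by omega)
      _ < ε := hn₀
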